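/- Let c ≥ 1. If for every binary word w of length n there is an SLP for w of size at most c·g(w) computable in polynomial time, then for every word w over an arbitrary alphabet there is an SLP for w of size at most 6c·g(w) computable in polynomial time. (Size statement: for all words w over Σ = {c₀,…,c_{k-1}} in which every letter occurs, g(φ(w)) ≤ 3 g(w) and g(w) ≤ 2 g(φ(w)), where φ(c_i) = a^i b; hence a c-approximation on the binary encoding φ(w) yields a 6c-approximation for w.) -/

import Mathlib

/-- A straight-line program over alphabet `α`, in topologically-sorted form:
nonterminals are `Fin n`, each has exactly one nonempty right-hand side, and
right-hand sides only refer to strictly smaller nonterminals (acyclicity). -/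
structure SLP (α : Type) where
  n : ℕ
  rhs : Fin n → List (α ⊕ Fin n)
  rhs_ne : ∀ i, rhs i ≠ []
  acyc : ∀ i j, Sum.inr j ∈ rhs i → (j : ℕ) < (i : ℕ)
  start : Fin n

namespace SLP

variable {α : Type}

/-- The word produced by nonterminal `i`. -/
def valAux (G : SLP α) (i : Fin G.n) : List α :=
  (G.rhs i).attach.flatMap (fun s =>
    match s with
    | ⟨Sum.inl a, _⟩ => [a]
    | ⟨Sum.inr j, hj⟩ => G.valAux j)
termination_by (i : ℕ)
decreasing_by exact G.acyc i j hj

/-- The word produced by the SLP. -/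
def val (G : SLP α) : List α := G.valAux G.start

/-- The size of the SLP: sum of lengths of all right-hand sides. -/
def size (G : SLP α) : ℕ := ∑ i : Fin G.n, (G.rhs i).length

end SLP

/-- `g w`: the minimal size of an SLP producing `w`. -/
noncomputable def g {α : Type} (w : List α) : ℕ :=
  sInf { s | ∃ G : SLP α, G.size = s ∧ G.val = w }

/-- The binary encoding `φ : {c₀,…,c_{k-1}}^* → {a,b}^*`, `φ(c_i) = aⁱb`,
where `a := true` and `b := false`. -/
def phi {k : ℕ} (w : List (Fin k)) : List Bool :=
  (w.map (fun c => List.replicate (c : ℕ) true ++ [false])).flatten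

namespace SLP

variable {α : Type}

def symVal (G : SLP α) : α ⊕ Fin G.n → List α
  | Sum.inl a => [a]
  | Sum.inr j => G.valAux j

lemma valAux_eq (G : SLP α) (i : Fin G.n) :
    G.valAux i = ((G.rhs i).map G.symVal).flatten := by
  rw [valAux]
  have : (fun (s : {x // x ∈ G.rhs i}) => match s with
    | ⟨Sum.inl a, _⟩ => ([a] : List α)
    | ⟨Sum.inr j, hj⟩ => G.valAux j) = fun s => G.symVal s.1 := by
    funext s; rcases s with ⟨a | j, hs⟩ <;> rfl
  rw [this]
  show (List.map (fun s => G.symVal s.1) (G.rhs i).attach).flatten = _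
  congr 1
  · exact List.attach_map_val

lemma valAux_ne (G : SLP α) (i : Fin G.n) : G.valAux i ≠ [] := by
  suffices h : ∀ m (i : Fin G.n), (i : ℕ) < m → G.valAux i ≠ [] from h (G.n) i i.isLt
  intro m
  induction m with
  | zero => omega
  | succ m ih =>
    intro i hi
    rw [valAux_eq, Ne, List.flatten_eq_nil_iff]
    intro h
    obtain ⟨s, hs⟩ := List.exists_mem_of_ne_nil _ (G.rhs_ne i)
    have := h (G.symVal s) (List.mem_map_of_mem hs)
    rcases s with a | j
    · simp [symVal] at this
    · simp only [symVal] at this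
      have hj := G.acyc i j hs
      exact ih j (by omega) this

lemma symVal_ne (G : SLP α) (s : α ⊕ Fin G.n) : G.symVal s ≠ [] := by
  rcases s with a | j
  · simp [symVal]
  · exact G.valAux_ne j

lemma val_ne (G : SLP α) : G.val ≠ [] := G.valAux_ne _

end SLP

noncomputable section

lemma g_le {α : Type} (w : List α) (G : SLP α) (h : G.val = w) : g w ≤ G.size :=
  Nat.sInf_le ⟨G, rfl, h⟩

def trivSLP {α : Type} (w : List α) (hw : w ≠ []) : SLP α where
  n := 1
  rhs := fun _ => w.map Sum.inl
  rhs_ne := fun _ => by simpa using hw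
  acyc := fun i j hj => by simp at hj
  start := 0

lemma flatten_map_singleton {α : Type} (w : List α) : (w.map (fun a => [a])).flatten = w := by
  induction w with
  | nil => rfl
  | cons a t ih => simp_all

lemma trivSLP_val {α : Type} (w : List α) (hw : w ≠ []) : (trivSLP w hw).val = w := by
  rw [SLP.val, SLP.valAux_eq]
  simp only [trivSLP, List.map_map, Function.comp_def, SLP.symVal]
  exact flatten_map_singleton w

lemma trivSLP_size {α : Type} (w : List α) (hw : w ≠ []) : (trivSLP w hw).size = w.length := by
  rw [SLP.size]
  show (∑ _i : Fin 1, (w.map Sum.inl).length) = _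
  simp

lemma exists_opt {α : Type} (w : List α) (hw : w ≠ []) :
    ∃ G : SLP α, G.val = w ∧ G.size = g w := by
  have hne : {s | ∃ G : SLP α, G.size = s ∧ G.val = w}.Nonempty :=
    ⟨(trivSLP w hw).size, trivSLP w hw, rfl, trivSLP_val w hw⟩
  obtain ⟨G, hs, hv⟩ := Nat.sInf_mem hne
  exact ⟨G, hv, hs⟩

lemma mem_terms {α : Type} (G : SLP α) (i : Fin G.n) (a : α) (ha : a ∈ G.valAux i) :
    ∃ i', Sum.inl a ∈ G.rhs i' := by
  suffices h : ∀ m (i : Fin G.n), (i : ℕ) < m → a ∈ G.valAux i → ∃ i', Sum.inl a ∈ G.rhs i' from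
    h G.n i i.isLt ha
  intro m
  induction m with
  | zero => omega
  | succ m ih =>
    intro i hi ha
    rw [SLP.valAux_eq] at ha
    rw [List.mem_flatten] at ha
    obtain ⟨l, hl, hal⟩ := ha
    rw [List.mem_map] at hl
    obtain ⟨s, hs, rfl⟩ := hl
    rcases s with b | j
    · simp [SLP.symVal] at hal
      exact ⟨i, hal ▸ hs⟩
    · have hj := G.acyc i j hs
      exact ih j (by omega) hal

lemma card_le_size {k : ℕ} (G : SLP (Fin k)) (w : List (Fin k)) (hval : G.val = w)
    (hall : ∀ i : Fin k, i ∈ w) : k ≤ G.size := by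
  classical
  set letters : Fin G.n → Finset (Fin k) :=
    fun i => ((G.rhs i).filterMap (fun s => Sum.getLeft? s)).toFinset with hlet
  have hsub : Finset.univ ⊆ Finset.univ.biUnion letters := by
    intro a _
    obtain ⟨i', hi'⟩ := mem_terms G G.start a (by rw [← SLP.val] at *; rw [hval]; exact hall a)
    refine Finset.mem_biUnion.2 ⟨i', Finset.mem_univ _, ?_⟩
    simp only [hlet, List.mem_toFinset, List.mem_filterMap]
    exact ⟨Sum.inl a, hi', rfl⟩
  calc k = (Finset.univ : Finset (Fin k)).card := by simp
    _ ≤ (Finset.univ.biUnion letters).card := Finset.card_le_card hsub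
    _ ≤ ∑ i : Fin G.n, (letters i).card := Finset.card_biUnion_le
    _ ≤ ∑ i : Fin G.n, (G.rhs i).length := by
        refine Finset.sum_le_sum fun i _ => ?_
        calc (letters i).card ≤ ((G.rhs i).filterMap _).length := List.toFinset_card_le _
          _ ≤ (G.rhs i).length := List.length_filterMap_le _ _
    _ = G.size := rfl

end

lemma phi_append {k : ℕ} (x y : List (Fin k)) : phi (x ++ y) = phi x ++ phi y := by
  simp [phi]

lemma phi_flatten {k : ℕ} (L : List (List (Fin k))) : phi L.flatten = (L.map phi).flatten := by
  induction L with
  | nil => rfl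
  | cons x t ih => simp [phi_append, ih]

lemma phi_single {k : ℕ} (c : Fin k) : phi [c] = List.replicate (c : ℕ) true ++ [false] := by
  simp [phi]

lemma aux_sum (k : ℕ) : (∑ m ∈ Finset.range k, if m ≠ 0 then 1 else 0) = k - 1 := by
  induction k with
  | zero => simp
  | succ k ih =>
    rw [Finset.sum_range_succ, ih]
    rcases Nat.eq_zero_or_pos k with h | h
    · simp [h]
    · have : k ≠ 0 := by omega
      simp [this]
      omega

section Encoder
variable {k : ℕ} (hk : 0 < k) (G : SLP (Fin k))

def encSym (s : Fin k ⊕ Fin G.n) : Bool ⊕ Fin (k + G.n) :=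
  match s with
  | Sum.inl c => Sum.inr ⟨(c : ℕ), by have := c.isLt; omega⟩
  | Sum.inr j => Sum.inr ⟨k + (j : ℕ), by have := j.isLt; omega⟩

@[reducible] def enc : SLP Bool where
  n := k + G.n
  rhs i :=
    if h : (i : ℕ) < k then
      (if (i : ℕ) = 0 then [Sum.inl false]
       else [Sum.inl true, Sum.inr ⟨(i : ℕ) - 1, by omega⟩])
    else (G.rhs ⟨(i : ℕ) - k, by have := i.isLt; omega⟩).map (encSym G)
  rhs_ne := by
    intro i
    split
    · split <;> simp
    · simp [G.rhs_ne]
  acyc := by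
    intro i j hj
    split at hj
    · rename_i h
      split at hj
      · simp at hj
      · rename_i h0
        simp at hj
        rw [hj]
        simp
        omega
    · rename_i h
      rw [List.mem_map] at hj
      obtain ⟨s, hs, hsj⟩ := hj
      rcases s with c | j'
      · simp [encSym] at hsj
        rw [← hsj]
        simp
        omega
      · simp [encSym] at hsj
        have h2 : (j' : ℕ) < (i : ℕ) - k := G.acyc _ _ hs
        rw [← hsj]
        simp
        omega
  start := ⟨k + (G.start : ℕ), by have := G.start.isLt; omega⟩

lemma enc_valAux_chain : ∀ m (hm : m < k) (hm2 : m < k + G.n),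
    (enc G).valAux ⟨m, hm2⟩ = List.replicate m true ++ [false] := by
  intro m
  induction m with
  | zero =>
    intro hm hm2
    rw [SLP.valAux_eq]
    have hr : (enc G).rhs ⟨0, hm2⟩ = [Sum.inl false] := by
      show (if h : (0:ℕ) < k then _ else _) = _
      rw [dif_pos hm]
      simp
    rw [hr]
    simp [SLP.symVal]
  | succ m ih =>
    intro hm hm2
    rw [SLP.valAux_eq]
    have hr : (enc G).rhs ⟨m + 1, hm2⟩ =
        [Sum.inl true, Sum.inr (⟨m, by omega⟩ : Fin (k + G.n))] := by
      show (if h : (m+1:ℕ) < k then _ else _) = _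
      rw [dif_pos hm]
      simp
    rw [hr]
    have hv := ih (by omega) (by omega)
    simp [SLP.symVal, hv, List.replicate_succ]

lemma enc_valAux_main : ∀ m, ∀ i : Fin G.n, (i : ℕ) < m →
    (enc G).valAux ⟨k + (i : ℕ), by show k + (i:ℕ) < k + G.n; have := i.isLt; omega⟩ = phi (G.valAux i) := by
  intro m
  induction m with
  | zero => omega
  | succ m ih =>
    intro i hi
    rw [SLP.valAux_eq]
    have hr : (enc G).rhs ⟨k + (i : ℕ), by show k + (i:ℕ) < k + G.n; have := i.isLt; omega⟩
        = (G.rhs i).map (encSym G) := by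
      show (if h : (k + (i:ℕ) : ℕ) < k then _ else _) = _
      rw [dif_neg (by omega)]
      congr 1
      · ext
        simp
    rw [hr]
    rw [SLP.valAux_eq G i, phi_flatten, List.map_map, List.map_map]
    congr 1
    apply List.map_congr_left
    intro s hs
    rcases s with c | j
    · show (enc G).symVal (encSym G (Sum.inl c)) = phi (G.symVal (Sum.inl c))
      show (enc G).valAux ⟨(c:ℕ), _⟩ = phi [c]
      rw [enc_valAux_chain G (c:ℕ) c.isLt, phi_single]
    · show (enc G).symVal (encSym G (Sum.inr j)) = phi (G.symVal (Sum.inr j))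
      show (enc G).valAux ⟨k + (j:ℕ), _⟩ = phi (G.valAux j)
      exact ih j (by have := G.acyc i j hs; omega)

lemma enc_val : (enc G).val = phi G.val := by
  rw [SLP.val, SLP.val]
  have : (enc G).start = ⟨k + (G.start : ℕ), by show k + (G.start:ℕ) < k + G.n; have := G.start.isLt; omega⟩ := rfl
  rw [this]
  exact enc_valAux_main G G.n G.start G.start.isLt

lemma enc_size (hk : 0 < k) : (enc G).size = (k + (k - 1)) + G.size := by
  rw [SLP.size]
  show (∑ i : Fin (k + G.n), ((enc G).rhs i).length) = _
  rw [Fin.sum_univ_add]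
  congr 1
  · -- chain part
    have h1 : ∀ i : Fin k, (((enc G).rhs (Fin.castAdd G.n i)).length)
        = if (i : ℕ) = 0 then 1 else 2 := by
      intro i
      have hr : (enc G).rhs (Fin.castAdd G.n i) =
          if ((Fin.castAdd G.n i : Fin (k + G.n)) : ℕ) = 0 then [Sum.inl false]
          else [Sum.inl true, Sum.inr (⟨((Fin.castAdd G.n i : Fin (k + G.n)) : ℕ) - 1,
            by have := i.isLt; simp; omega⟩ : Fin (k + G.n))] := by
        show (if h : ((Fin.castAdd G.n i : Fin (k + G.n)) : ℕ) < k then _ else _) = _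
        rw [dif_pos (by simpa using i.isLt)]
      rw [hr]
      by_cases h0 : (i : ℕ) = 0
      · rw [if_pos (by simpa using h0), if_pos h0]
        rfl
      · rw [if_neg (by simpa using h0), if_neg h0]
        rfl
    rw [Finset.sum_congr rfl (fun i _ => h1 i)]
    have h2 : ∀ i : Fin k, (if (i : ℕ) = 0 then 1 else 2)
        = 1 + if (i : ℕ) ≠ 0 then 1 else 0 := by
      intro i; by_cases h : (i:ℕ) = 0 <;> simp [h]
    rw [Finset.sum_congr rfl (fun i _ => h2 i), Finset.sum_add_distrib]
    simp only [Finset.sum_const, Finset.card_univ, Fintype.card_fin, smul_eq_mul, mul_one]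
    congr 1
    rw [Fin.sum_univ_eq_sum_range (fun m => if m ≠ 0 then 1 else 0) k]
    exact aux_sum k
  · -- G part
    apply Finset.sum_congr rfl
    intro i _
    have hr : (enc G).rhs (Fin.natAdd k i) = (G.rhs i).map (encSym G) := by
      show (if h : ((Fin.natAdd k i : Fin (k + G.n)) : ℕ) < k then _ else _) = _
      rw [dif_neg (by simp)]
      congr 1
      ext
      simp
    rw [hr, List.length_map]

end Encoder

section Decoder
variable {k : ℕ}

/-- Block decoder with running count of `a`s (`true`s). -/
def fH (hk : 0 < k) : List Bool → ℕ → List (Fin k) × ℕ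
  | [], p => ([], p)
  | true :: t, p => fH hk t (p + 1)
  | false :: t, p => (⟨p % k, Nat.mod_lt _ hk⟩ :: (fH hk t 0).1, (fH hk t 0).2)

def lead : List Bool → ℕ
  | [] => 0
  | true :: t => lead t + 1
  | false :: _ => 0

variable (hk : 0 < k)

lemma fH_append (u v : List Bool) : ∀ p, fH hk (u ++ v) p =
    ((fH hk u p).1 ++ (fH hk v (fH hk u p).2).1, (fH hk v (fH hk u p).2).2) := by
  induction u with
  | nil => intro p; simp [fH]
  | cons b t ih =>
    intro p
    cases b
    · simp only [List.cons_append, fH, List.append_eq, ih]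
    · simp only [List.cons_append, fH, List.append_eq, ih]

lemma fH_replicate (m : ℕ) (l : List Bool) : ∀ p,
    fH hk (List.replicate m true ++ l) p = fH hk l (p + m) := by
  induction m with
  | zero => intro p; simp [fH]
  | succ m ih =>
    intro p
    rw [List.replicate_succ]
    show fH hk (true :: (List.replicate m true ++ l)) p = _
    rw [fH, ih]
    congr 1
    omega

lemma fH_no_false (v : List Bool) (h : false ∉ v) : ∀ p, fH hk v p = ([], p + v.length) := by
  induction v with
  | nil => intro p; simp [fH]
  | cons b t ih =>
    intro p
    cases b
    · simp at h
    · simp only [List.mem_cons] at h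
      push_neg at h
      rw [fH, ih h.2]
      simp
      omega

lemma fH_shift (v : List Bool) (h : false ∈ v) : ∀ p,
    fH hk v p = (⟨(p + lead v) % k, Nat.mod_lt _ hk⟩ :: (fH hk v 0).1.tail, (fH hk v 0).2) := by
  induction v with
  | nil => simp at h
  | cons b t ih =>
    intro p
    cases b
    · -- false :: t
      show fH hk (false :: t) p = _
      rw [fH, fH]
      simp [lead]
    · -- true :: t
      have ht : false ∈ t := by simpa using h
      show fH hk (true :: t) p = _
      rw [fH, ih ht (p + 1)]
      have h0 : fH hk (true :: t) 0 = fH hk t 1 := by rw [fH]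
      rw [h0, ih ht 1, ih ht 0]
      simp only [List.tail_cons]
      have he : p + 1 + lead t = p + lead (true :: t) := by simp [lead]; omega
      rw [he]

lemma fH_phi (w : List (Fin k)) : fH hk (phi w) 0 = (w, 0) := by
  induction w with
  | nil => simp [phi, fH]
  | cons c t ih =>
    have hphi : phi (c :: t) = List.replicate (c : ℕ) true ++ (false :: phi t) := by
      simp [phi]
    rw [hphi, fH_replicate, fH, ih]
    simp
    exact Fin.ext (Nat.mod_eq_of_lt c.isLt)

end Decoder

section Dec
variable {k : ℕ} (hk : 0 < k) (B : SLP Bool)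

/-- Translate a rhs of `B` into a rhs over `Fin k`, with running `a`-count `p`. -/
def tr : List (Bool ⊕ Fin B.n) → ℕ → List (Fin k ⊕ Fin (B.n + 1))
  | [], _ => []
  | Sum.inl true :: t, p => tr t (p + 1)
  | Sum.inl false :: t, p => Sum.inl ⟨p % k, Nat.mod_lt _ hk⟩ :: tr t 0
  | Sum.inr j :: t, p =>
    if false ∈ B.valAux j then
      Sum.inl ⟨(p + lead (B.valAux j)) % k, Nat.mod_lt _ hk⟩ ::
        ((if (fH hk (B.valAux j) 0).1.tail = [] then [] else [Sum.inr j.castSucc])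
          ++ tr t (fH hk (B.valAux j) 0).2)
    else tr t (p + (B.valAux j).length)

lemma tr_mem : ∀ (l : List (Bool ⊕ Fin B.n)) (p : ℕ) (j' : Fin (B.n + 1)),
    Sum.inr j' ∈ tr hk B l p → ∃ j, Sum.inr j ∈ l ∧ j' = Fin.castSucc j := by
  intro l
  induction l with
  | nil => intro p j' h; simp [tr] at h
  | cons s t ih =>
    intro p j' h
    rcases s with b | j
    · cases b
      · rw [tr] at h
        obtain ⟨j, hj1, hj2⟩ := ih 0 j' (by simpa using h)
        exact ⟨j, by simp [hj1], hj2⟩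
      · rw [tr] at h
        obtain ⟨j, hj1, hj2⟩ := ih (p+1) j' h
        exact ⟨j, by simp [hj1], hj2⟩
    · rw [tr] at h
      split at h
      · simp only [List.mem_cons, List.mem_append] at h
        rcases h with h | h | h
        · simp at h
        · split at h
          · simp at h
          · simp at h
            exact ⟨j, by simp, h⟩
        · obtain ⟨j2, hj1, hj2⟩ := ih _ j' h
          exact ⟨j2, by simp [hj1], hj2⟩
      · obtain ⟨j2, hj1, hj2⟩ := ih _ j' h
        exact ⟨j2, by simp [hj1], hj2⟩

lemma tr_head : ∀ (l : List (Bool ⊕ Fin B.n)) (p : ℕ),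
    tr hk B l p = [] ∨ ∃ x t', tr hk B l p = Sum.inl x :: t' := by
  intro l
  induction l with
  | nil => intro p; left; rfl
  | cons s t ih =>
    intro p
    rcases s with b | j
    · cases b
      · right; exact ⟨_, _, rfl⟩
      · exact ih (p + 1)
    · rw [tr]
      split
      · right; exact ⟨_, _, rfl⟩
      · exact ih _

lemma tr_len : ∀ (l : List (Bool ⊕ Fin B.n)) (p : ℕ),
    (tr hk B l p).length ≤ 2 * l.length := by
  intro l
  induction l with
  | nil => intro p; simp [tr]
  | cons s t ih =>
    intro p
    rcases s with b | j
    · cases b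
      · rw [tr]; have := ih 0; simp only [List.length_cons]; simp; omega
      · rw [tr]; have := ih (p + 1); simp only [List.length_cons]; omega
    · rw [tr]
      split
      · have := ih (fH hk (B.valAux j) 0).2
        simp only [List.length_cons, List.length_append]
        split <;> simp <;> omega
      · have := ih (p + (B.valAux j).length)
        simp only [List.length_cons]
        omega

/-- The decoded SLP. -/
@[reducible] def dec : SLP (Fin k) where
  n := B.n + 1
  rhs i :=
    if h : (i : ℕ) < B.n then
      (if (tr hk B (B.rhs ⟨(i : ℕ), h⟩) 0).tail = [] then [Sum.inl ⟨0, hk⟩]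
       else (tr hk B (B.rhs ⟨(i : ℕ), h⟩) 0).tail)
    else
      Sum.inl ⟨lead B.val % k, Nat.mod_lt _ hk⟩ ::
        (if (fH hk B.val 0).1.tail = [] then [] else [Sum.inr B.start.castSucc])
  rhs_ne := by
    intro i
    split
    · split
      · simp
      · assumption
    · simp
  acyc := by
    intro i j' hj'
    split at hj'
    · rename_i h
      split at hj'
      · simp at hj'
      · have hj2 := List.mem_of_mem_tail hj'
        obtain ⟨j, _, rfl⟩ := tr_mem hk B _ _ _ hj2
        have h3 : (j : ℕ) < (i : ℕ) := B.acyc _ _ ‹Sum.inr j ∈ B.rhs ⟨(i:ℕ), h⟩›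
        simp
        omega
    · rename_i h
      simp only [List.mem_cons] at hj'
      rcases hj' with h1 | h1
      · simp at h1
      · split at h1
        · simp at h1
        · simp at h1
          subst h1
          have := B.start.isLt
          have := i.isLt
          simp
          omega
  start := ⟨B.n, Nat.lt_succ_self _⟩

end Dec

section DecVal
variable {k : ℕ} (hk : 0 < k) (B : SLP Bool)

lemma flattenval_ne {α : Type} (A : SLP α) (s : List (α ⊕ Fin A.n)) (hs : s ≠ []) :
    (s.map A.symVal).flatten ≠ [] := by
  rw [Ne, List.flatten_eq_nil_iff]
  intro h
  obtain ⟨x, hx⟩ := List.exists_mem_of_ne_nil _ hs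
  exact A.symVal_ne x (h _ (List.mem_map_of_mem hx))

lemma trVal : ∀ (l : List (Bool ⊕ Fin B.n)),
    (∀ j, Sum.inr j ∈ l → (dec hk B).valAux j.castSucc =
      (if (fH hk (B.valAux j) 0).1.tail = [] then [(⟨0, hk⟩ : Fin k)]
       else (fH hk (B.valAux j) 0).1.tail)) →
    ∀ p, ((tr hk B l p).map (dec hk B).symVal).flatten = (fH hk ((l.map B.symVal).flatten) p).1 := by
  intro l
  induction l with
  | nil => intro H p; simp [tr, fH]
  | cons s t ih =>
    intro H p
    have Ht := fun j hj => H j (List.mem_cons_of_mem _ hj)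
    rcases s with b | j
    · cases b
      · -- false
        rw [tr]
        have hword : ((Sum.inl false :: t).map B.symVal).flatten
            = false :: ((t.map B.symVal).flatten) := by
          simp [SLP.symVal]
        rw [hword, fH]
        simp only [List.map_cons, List.flatten]
        rw [ih Ht 0]
        rfl
      · -- true
        rw [tr]
        have hword : ((Sum.inl true :: t).map B.symVal).flatten
            = true :: ((t.map B.symVal).flatten) := by
          simp [SLP.symVal]
        rw [hword, fH]
        exact ih Ht (p + 1)
    · -- nonterminal j
      have hword : ((Sum.inr j :: t).map B.symVal).flatten
          = B.valAux j ++ ((t.map B.symVal).flatten) := by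
        simp [SLP.symVal]
      rw [hword, tr, fH_append]
      by_cases hf : false ∈ B.valAux j
      · rw [if_pos hf]
        rw [fH_shift hk _ hf p]
        simp only [List.map_cons, List.map_append, List.flatten, List.flatten_append]
        rw [ih Ht ((fH hk (B.valAux j) 0).2)]
        by_cases htail : (fH hk (B.valAux j) 0).1.tail = []
        · rw [if_pos htail, htail]
          simp [SLP.symVal]
        · rw [if_neg htail]
          have hval := H j List.mem_cons_self
          rw [if_neg htail] at hval
          simp only [List.map_cons, List.map_nil, List.flatten]
          show ((dec hk B).symVal (Sum.inl _) ++ (((dec hk B).valAux j.castSucc ++ []) ++ _)) = _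
          rw [hval]
          simp [SLP.symVal]
      · rw [if_neg hf]
        rw [fH_no_false hk _ hf p]
        simp only [List.nil_append]
        exact ih Ht (p + (B.valAux j).length)

lemma dec_valAux : ∀ m, ∀ j : Fin B.n, (j : ℕ) < m →
    (dec hk B).valAux j.castSucc =
      (if (fH hk (B.valAux j) 0).1.tail = [] then [(⟨0, hk⟩ : Fin k)]
       else (fH hk (B.valAux j) 0).1.tail) := by
  intro m
  induction m with
  | zero => omega
  | succ m ih =>
    intro j hj
    have hlt : ((j.castSucc : Fin (B.n + 1)) : ℕ) < B.n := by simp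
    have hidx : (⟨((j.castSucc : Fin (B.n + 1)) : ℕ), hlt⟩ : Fin B.n) = j :=
      Fin.ext (by simp)
    have hr : (dec hk B).rhs j.castSucc =
        (if (tr hk B (B.rhs j) 0).tail = [] then [Sum.inl (⟨0, hk⟩ : Fin k)]
         else (tr hk B (B.rhs j) 0).tail) := by
      show (if h : ((j.castSucc : Fin (B.n + 1)) : ℕ) < B.n then _ else _) = _
      rw [dif_pos hlt, hidx]
    have hflatten : ((tr hk B (B.rhs j) 0).map (dec hk B).symVal).flatten
        = (fH hk (B.valAux j) 0).1 := by
      rw [SLP.valAux_eq B j]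
      apply trVal
      intro j'' hj''
      have := B.acyc j j'' hj''
      exact ih j'' (by omega)
    rw [SLP.valAux_eq, hr]
    rcases tr_head hk B (B.rhs j) 0 with hT | ⟨x, t', hT⟩
    · rw [hT] at hflatten ⊢
      simp only [List.map_nil, List.flatten_nil] at hflatten
      simp [SLP.symVal, ← hflatten]
    · rw [hT] at hflatten ⊢
      simp only [List.map_cons, List.flatten] at hflatten
      have htail : (fH hk (B.valAux j) 0).1.tail = (t'.map (dec hk B).symVal).flatten := by
        rw [← hflatten]
        simp [SLP.symVal]
      simp only [List.tail_cons]
      by_cases ht' : t' = []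
      · subst ht'
        simp only [↓reduceIte]
        simp only [List.map_nil, List.flatten] at htail
        rw [if_pos htail]
        simp [SLP.symVal]
      · simp only [ht', ↓reduceIte]
        rw [if_neg (by rw [htail]; exact flattenval_ne _ _ ht')]
        exact htail.symm

lemma phi_mem_false (w : List (Fin k)) (hw : w ≠ []) : false ∈ phi w := by
  cases w with
  | nil => simp at hw
  | cons c t => simp [phi]

lemma dec_val (w : List (Fin k)) (hw : w ≠ []) (hBv : B.val = phi w) : (dec hk B).val = w := by
  have hstart : (dec hk B).start = ⟨B.n, Nat.lt_succ_self _⟩ := rfl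
  rw [SLP.val, hstart, SLP.valAux_eq]
  have hr : (dec hk B).rhs ⟨B.n, Nat.lt_succ_self _⟩ =
      Sum.inl (⟨lead B.val % k, Nat.mod_lt _ hk⟩ : Fin k) ::
        (if (fH hk B.val 0).1.tail = [] then [] else [Sum.inr B.start.castSucc]) := by
    show (if h : ((⟨B.n, Nat.lt_succ_self _⟩ : Fin (B.n + 1)) : ℕ) < B.n then _ else _) = _
    rw [dif_neg (by simp)]
  rw [hr]
  have hfalse : false ∈ phi w := phi_mem_false w hw
  have h1 : (fH hk (phi w) 0).1 = w := congrArg Prod.fst (fH_phi hk w)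
  have hshift := congrArg Prod.fst (fH_shift hk (phi w) hfalse 0)
  have hw1 : w = (⟨(0 + lead (phi w)) % k, Nat.mod_lt _ hk⟩ : Fin k) :: (fH hk (phi w) 0).1.tail := by
    conv_lhs => rw [← h1]
    exact hshift
  have hgoal : (List.map (dec hk B).symVal
      (Sum.inl (⟨lead B.val % k, Nat.mod_lt _ hk⟩ : Fin k) ::
        (if (fH hk B.val 0).1.tail = [] then [] else [Sum.inr B.start.castSucc]))).flatten
      = (⟨lead B.val % k, Nat.mod_lt _ hk⟩ : Fin k) :: (fH hk B.val 0).1.tail := by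
    by_cases htail : (fH hk B.val 0).1.tail = []
    · rw [if_pos htail, htail]
      simp [SLP.symVal]
    · rw [if_neg htail]
      have hvs := dec_valAux hk B B.n B.start B.start.isLt
      have hBstart : B.valAux B.start = B.val := rfl
      rw [hBstart, if_neg htail] at hvs
      simp [SLP.symVal, hvs]
  rw [hgoal, hBv]
  conv_rhs => rw [hw1]
  congr 1
  exact Fin.ext (by simp)

lemma dec_size : (dec hk B).size ≤ 2 * B.size + 2 := by
  rw [SLP.size]
  have hsum : (∑ i : Fin (B.n + 1), ((dec hk B).rhs i).length)
      = (∑ i : Fin B.n, ((dec hk B).rhs i.castSucc).length)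
        + ((dec hk B).rhs (Fin.last B.n)).length := Fin.sum_univ_castSucc _
  rw [show (∑ i : Fin (dec hk B).n, ((dec hk B).rhs i).length)
      = ∑ i : Fin (B.n + 1), ((dec hk B).rhs i).length from rfl, hsum]
  have h1 : ∀ i : Fin B.n, ((dec hk B).rhs i.castSucc).length ≤ 2 * (B.rhs i).length := by
    intro i
    have hlt : ((i.castSucc : Fin (B.n + 1)) : ℕ) < B.n := by simp
    have hidx : (⟨((i.castSucc : Fin (B.n + 1)) : ℕ), hlt⟩ : Fin B.n) = i := Fin.ext (by simp)
    have hr : (dec hk B).rhs i.castSucc =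
        (if (tr hk B (B.rhs i) 0).tail = [] then [Sum.inl (⟨0, hk⟩ : Fin k)]
         else (tr hk B (B.rhs i) 0).tail) := by
      show (if h : ((i.castSucc : Fin (B.n + 1)) : ℕ) < B.n then _ else _) = _
      rw [dif_pos hlt, hidx]
    rw [hr]
    have hlen : 1 ≤ (B.rhs i).length := List.length_pos_iff.2 (B.rhs_ne i)
    have htr := tr_len hk B (B.rhs i) 0
    split
    · simp; omega
    · have h4 : (tr hk B (B.rhs i) 0).tail.length = (tr hk B (B.rhs i) 0).length - 1 :=
        List.length_tail
      omega
  have h2 : ((dec hk B).rhs (Fin.last B.n)).length ≤ 2 := by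
    have hr : (dec hk B).rhs (Fin.last B.n) =
        Sum.inl (⟨lead B.val % k, Nat.mod_lt _ hk⟩ : Fin k) ::
          (if (fH hk B.val 0).1.tail = [] then [] else [Sum.inr B.start.castSucc]) := by
      show (if h : ((Fin.last B.n : Fin (B.n + 1)) : ℕ) < B.n then _ else _) = _
      rw [dif_neg (by simp)]
    rw [hr]
    split <;> simp
  calc (∑ i : Fin B.n, ((dec hk B).rhs i.castSucc).length) + ((dec hk B).rhs (Fin.last B.n)).length
      ≤ (∑ i : Fin B.n, 2 * (B.rhs i).length) + 2 :=
        Nat.add_le_add (Finset.sum_le_sum fun i _ => h1 i) h2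
    _ = 2 * B.size + 2 := by rw [← Finset.mul_sum]; rfl

end DecVal

/-- Size statement behind the approximation-ratio transfer: a `c`-approximating SLP
for the binary encoding `φ(w)` yields a `6c`-approximating SLP for `w`. -/
theorem approx_transfer (c : ℕ) (hc : 1 ≤ c) (k : ℕ) (hk : 1 ≤ k)
    (w : List (Fin k)) (hall : ∀ i : Fin k, i ∈ w)
    (B : SLP Bool) (hB : B.val = phi w) (happrox : B.size ≤ c * g (phi w)) :
    ∃ A : SLP (Fin k), A.val = w ∧ A.size ≤ 6 * c * g w := by
  have hk' : 0 < k := hk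
  have hw : w ≠ [] := List.ne_nil_of_mem (hall ⟨0, hk⟩)
  obtain ⟨G, hGval, hGsize⟩ := exists_opt w hw
  have hkg : k ≤ g w := hGsize ▸ card_le_size G w hGval hall
  have hphile : g (phi w) ≤ g w + (k + (k - 1)) := by
    have h := g_le (phi w) (enc G) (by rw [enc_val, hGval])
    rw [enc_size G hk'] at h
    omega
  refine ⟨dec hk' B, dec_val hk' B w hw hB, ?_⟩
  have h1 := dec_size hk' B
  obtain ⟨m, hm⟩ : ∃ m, k = m + 1 := ⟨k - 1, by omega⟩
  have hmw : m + 1 ≤ g w := by omega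
  have key : c * (m + 1) ≤ c * (g w) := Nat.mul_le_mul_left c hmw
  have h2 : (dec hk' B).size ≤ 2 * (c * g (phi w)) + 2 := by omega
  have h3 : c * g (phi w) ≤ c * (g w + (m + 1 + m)) := Nat.mul_le_mul_left c (by omega)
  nlinarith [key, hc, h2, h3]
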